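/- arXiv:1301.2227 — 2 statements merged into one kernel-verified Lean document; each statement's English description precedes it below -/
import Mathlib

section
/- Let q be any nonzero complex number. In the tensor algebra T(V) of V = ℂ² equipped with the q-shuffle product * determined by the symmetric bicharacter χ with χ(F1,F1) = χ(F2,F2) = q² and χ(F1,F2) = χ(F2,F1) = q⁻¹, the q-Serre relations hold identically: F1*F1*F2 − (q+q⁻¹)·F1*F2*F1 + F2*F1*F1 = 0 and F2*F2*F1 − (q+q⁻¹)·F2*F1*F2 + F1*F2*F2 = 0. -/
/-- Words in the two letters `F1 = 0` and `F2 = 1`: a basis of `T(ℂ²)`. -/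
abbrev Word := List (Fin 2)

/-- The underlying space of the tensor algebra `T(ℂ²)`, as the free `ℂ`-module on words. -/
abbrev TA := Word →₀ ℂ

/-- The symmetric bicharacter on letters: `χ(F1,F1) = χ(F2,F2) = q²`,
`χ(F1,F2) = χ(F2,F1) = q⁻¹`. -/
noncomputable def chi (q : ℂ) (a b : Fin 2) : ℂ := if a = b then q ^ 2 else q⁻¹

/-- The `q`-shuffle product of two basis words: every `(m,n)`-shuffle of the two words
appears, weighted by the product of `χ(xᵢ, yⱼ)` over all pairs `(i,j)` such that the
letter `yⱼ` is placed before the letter `xᵢ` in the shuffled word. -/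
noncomputable def shufWord (q : ℂ) : Word → Word → TA
  | [], v => Finsupp.single v 1
  | u, [] => Finsupp.single u 1
  | x :: u, y :: v =>
      Finsupp.mapDomain (List.cons x) (shufWord q u (y :: v))
      + (((x :: u).map (fun a => chi q a y)).prod) •
          Finsupp.mapDomain (List.cons y) (shufWord q (x :: u) v)
  termination_by u v => u.length + v.length

/-- The `q`-shuffle product on `T(ℂ²)`, extended bilinearly from basis words. -/
noncomputable def shufMul (q : ℂ) (f g : TA) : TA :=
  f.sum fun u cu => g.sum fun v cv => (cu * cv) • shufWord q u v

/-- The empty word: the unit of the shuffle algebra. -/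
noncomputable def oneTA : TA := Finsupp.single ([] : Word) 1

/-- The generator `F1` as an element of `T(ℂ²)`. -/
noncomputable def F1 : TA := Finsupp.single ([0] : Word) 1

/-- The generator `F2` as an element of `T(ℂ²)`. -/
noncomputable def F2 : TA := Finsupp.single ([1] : Word) 1

lemma shufMul_single_single (q : ℂ) (u v : Word) :
    shufMul q (Finsupp.single u 1) (Finsupp.single v 1) = shufWord q u v := by
  rw [shufMul, Finsupp.sum_single_index (by simp), Finsupp.sum_single_index (by simp)]
  simp

lemma shufMul_add_left (q : ℂ) (f g h : TA) :
    shufMul q (f + g) h = shufMul q f h + shufMul q g h := by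
  unfold shufMul
  apply Finsupp.sum_add_index' (by simp)
  intro u c1 c2
  rw [← Finsupp.sum_add]
  congr 1; funext v cv
  rw [add_mul, add_smul]

lemma shufMul_smul_left (q c : ℂ) (f g : TA) :
    shufMul q (c • f) g = c • shufMul q f g := by
  unfold shufMul
  rw [Finsupp.sum_smul_index' (by simp), Finsupp.smul_sum]
  congr 1; funext u cu
  rw [Finsupp.smul_sum]
  congr 1; funext v cv
  rw [smul_eq_mul, mul_assoc, mul_smul]

lemma sW_one_one (q : ℂ) (a b : Fin 2) : shufWord q [a] [b] =
    Finsupp.single [a, b] 1 + chi q a b • Finsupp.single [b, a] 1 := by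
  simp [shufWord]

lemma sW_aab (q : ℂ) (a b : Fin 2) : shufWord q [a, a] [b] =
    Finsupp.single [a, a, b] 1 + chi q a b • Finsupp.single [a, b, a] 1
      + (chi q a b * chi q a b) • Finsupp.single [b, a, a] 1 := by
  simp [shufWord, Finsupp.mapDomain_add, Finsupp.mapDomain_smul, smul_add, add_assoc]

lemma sW_aba (q : ℂ) (a b : Fin 2) : shufWord q [a, b] [a] =
    Finsupp.single [a, b, a] 1 + chi q b a • Finsupp.single [a, a, b] 1
      + (chi q a a * chi q b a) • Finsupp.single [a, a, b] 1 := by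
  simp [shufWord, Finsupp.mapDomain_add, Finsupp.mapDomain_smul, smul_add, add_assoc]

lemma sW_baa (q : ℂ) (a b : Fin 2) : shufWord q [b, a] [a] =
    (Finsupp.single [b, a, a] 1 + chi q a a • Finsupp.single [b, a, a] 1)
      + (chi q b a * chi q a a) • Finsupp.single [a, b, a] 1 := by
  simp [shufWord, Finsupp.mapDomain_add, Finsupp.mapDomain_smul, smul_add, add_assoc]

lemma serre_key (q : ℂ) (hq : q ≠ 0) (a b : Fin 2) (hab : a ≠ b) :
    shufMul q (shufMul q (Finsupp.single [a] 1) (Finsupp.single [a] 1)) (Finsupp.single [b] 1)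
    - (q + q⁻¹) • shufMul q (shufMul q (Finsupp.single [a] 1) (Finsupp.single [b] 1)) (Finsupp.single [a] 1)
    + shufMul q (shufMul q (Finsupp.single [b] 1) (Finsupp.single [a] 1)) (Finsupp.single [a] 1) = 0 := by
  have hba : b ≠ a := hab.symm
  simp only [shufMul_single_single, sW_one_one q a a, sW_one_one q a b, sW_one_one q b a,
    shufMul_add_left, shufMul_smul_left, shufMul_single_single,
    sW_aab, sW_aba, sW_baa]
  simp only [chi, if_pos rfl, if_neg hab, if_neg hba, ↓reduceIte]
  match_scalars <;> field_simp <;> ring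

theorem q_serre_relations_shuffle (q : ℂ) (hq : q ≠ 0) :
    shufMul q (shufMul q F1 F1) F2 - (q + q⁻¹) • shufMul q (shufMul q F1 F2) F1
        + shufMul q (shufMul q F2 F1) F1 = 0 ∧
    shufMul q (shufMul q F2 F2) F1 - (q + q⁻¹) • shufMul q (shufMul q F2 F1) F2
        + shufMul q (shufMul q F1 F2) F2 = 0 := by
  rw [show F1 = Finsupp.single ([0] : Word) 1 from rfl, show F2 = Finsupp.single ([1] : Word) 1 from rfl]
  exact ⟨serre_key q hq 0 1 (by decide), serre_key q hq 1 0 (by decide)⟩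
end

section
/- Fix an integer p ≥ 2 and set q = exp(iπ/p) ∈ ℂ. The p³ elements P(r,t,s) ∈ T(ℂ²) for 0 ≤ r,t,s ≤ p−1 are linearly independent over ℂ. -/
/-- `q = exp(iπ/p)`. -/
noncomputable def qval (p : ℕ) : ℂ := Complex.exp (Real.pi * Complex.I / p)

/-- Gaussian `q²`-integer `[n] = Σ_{k<n} q^{2k}`. -/
noncomputable def qint (p n : ℕ) : ℂ := ∑ k ∈ Finset.range n, qval p ^ (2 * k)

/-- Gaussian `q²`-factorial `[n]! = ∏_{k=1}^n [k]`. -/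
noncomputable def qfac (p n : ℕ) : ℂ := ∏ k ∈ Finset.range n, qint p (k + 1)

/-- Gaussian binomial `[m choose i] = [m]!/([i]!·[m−i]!)`. -/
noncomputable def qbinom (p m i : ℕ) : ℂ := qfac p m / (qfac p i * qfac p (m - i))

/-- Powers with respect to the `q`-shuffle product. -/
noncomputable def shufPow (q : ℂ) (f : TA) : ℕ → TA
  | 0 => oneTA
  | n + 1 => shufMul q f (shufPow q f n)

/-- The element `X3 = −q⁻²·(F2 ⊗ F1)` of `T(ℂ²)`. -/
noncomputable def X3 (p : ℕ) : TA := (-(qval p)⁻¹ ^ 2) • Finsupp.single ([1, 0] : Word) 1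

/-- The PBW element `P(r,t,s) = (1/([r]!·[t]!·[s]!)) · F1^{*r} * X3^{*t} * F2^{*s}`. -/
noncomputable def P (p r t s : ℕ) : TA :=
  (qfac p r * qfac p t * qfac p s)⁻¹ •
    shufMul (qval p) (shufMul (qval p) (shufPow (qval p) F1 r) (shufPow (qval p) (X3 p) t))
      (shufPow (qval p) F2 s)
open Finsupp List

lemma shufWord_nil_left (q : ℂ) (v : Word) : shufWord q [] v = Finsupp.single v 1 := by
  cases v <;> rw [shufWord]

lemma shufWord_nil_right (q : ℂ) (u : Word) : shufWord q u [] = Finsupp.single u 1 := by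
  cases u with
  | nil => rw [shufWord]
  | cons x u => rw [shufWord]; simp

lemma shufWord_cons_cons (q : ℂ) (x y : Fin 2) (u v : Word) :
    shufWord q (x :: u) (y :: v) =
      Finsupp.mapDomain (List.cons x) (shufWord q u (y :: v))
      + (((x :: u).map (fun a => chi q a y)).prod) •
          Finsupp.mapDomain (List.cons y) (shufWord q (x :: u) v) := by
  rw [shufWord]

inductive Shuf : Word → Word → Word → Prop
  | nil_left (v) : Shuf [] v v
  | nil_right (u) : Shuf u [] u
  | left {u v w} (x : Fin 2) : Shuf u v w → Shuf (x :: u) v (x :: w)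
  | right {u v w} (y : Fin 2) : Shuf u v w → Shuf u (y :: v) (y :: w)

lemma mem_shufWord {q : ℂ} : ∀ (u v w : Word), w ∈ (shufWord q u v).support → Shuf u v w := by
  intro u v
  induction u, v using shufWord.induct with
  | case1 v =>
      intro w hw
      rw [shufWord_nil_left] at hw
      have := Finsupp.support_single_subset hw
      simp only [Finset.mem_singleton] at this; subst this; exact Shuf.nil_left _
  | case2 u h =>
      intro w hw
      rw [shufWord_nil_right] at hw
      have := Finsupp.support_single_subset hw
      simp only [Finset.mem_singleton] at this; subst this; exact Shuf.nil_right _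
  | case3 x u y v ih1 ih2 =>
      intro w hw
      rw [shufWord_cons_cons] at hw
      rcases Finset.mem_union.mp (Finsupp.support_add hw) with h | h
      · rcases Finset.mem_image.mp (Finsupp.mapDomain_support h) with ⟨w', hw', rfl⟩
        exact Shuf.left x (ih1 w' hw')
      · have h2 := Finsupp.support_smul h
        rcases Finset.mem_image.mp (Finsupp.mapDomain_support h2) with ⟨w', hw', rfl⟩
        exact Shuf.right y (ih2 w' hw')

/-- number of 1's that have some 0 after them -/
def gcov : Word → ℕ
  | [] => 0
  | x :: w => gcov w + (if x = 1 ∧ (0 : Fin 2) ∈ w then 1 else 0)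

/-- ballot property with slack k : every prefix has #0 ≤ #1 + k -/
def balk : ℕ → Word → Prop
  | _, [] => True
  | k, x :: w => if x = (0 : Fin 2) then 1 ≤ k ∧ balk (k - 1) w else balk (k + 1) w

lemma balk_mono : ∀ (w : Word) {k k' : ℕ}, k ≤ k' → balk k w → balk k' w := by
  intro w
  induction w with
  | nil => intro k k' _ _; trivial
  | cons x w ih =>
      intro k k' hkk h
      simp only [balk] at h ⊢
      split at h
      · simp_all; exact ⟨by omega, ih (by omega) h.2⟩
      · simp_all; exact ih (by omega) h

lemma Shuf.sublist_left {u v w : Word} (h : Shuf u v w) : u <+ w := by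
  induction h with
  | nil_left v => exact List.nil_sublist v
  | nil_right u => exact List.Sublist.refl u
  | left x _ ih => exact ih.cons₂ x
  | right y _ ih => exact ih.cons y

lemma Shuf.sublist_right {u v w : Word} (h : Shuf u v w) : v <+ w := by
  induction h with
  | nil_left v => exact List.Sublist.refl v
  | nil_right u => exact List.nil_sublist u
  | left x _ ih => exact ih.cons x
  | right y _ ih => exact ih.cons₂ y

lemma Shuf.count {u v w : Word} (h : Shuf u v w) (c : Fin 2) :
    w.count c = u.count c + v.count c := by
  induction h with
  | nil_left v => simp
  | nil_right u => simp
  | left x _ ih => simp [List.count_cons, ih]; ring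
  | right y _ ih => simp [List.count_cons, ih]; ring

lemma Shuf.gcov_le {u v w : Word} (h : Shuf u v w) : gcov u + gcov v ≤ gcov w := by
  induction h with
  | nil_left v => simp [gcov]
  | nil_right u => simp [gcov]
  | @left u' v' w' x h ih =>
      simp only [gcov]
      have hm : (x = 1 ∧ (0:Fin 2) ∈ u') → (x = 1 ∧ (0:Fin 2) ∈ w') :=
        fun ⟨h1, h2⟩ => ⟨h1, h.sublist_left.mem h2⟩
      by_cases hc : x = 1 ∧ (0:Fin 2) ∈ u'
      · simp only [if_pos hc, if_pos (hm hc)]; omega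
      · simp only [if_neg hc]; split <;> omega
  | @right u' v' w' y h ih =>
      simp only [gcov]
      have hm : (y = 1 ∧ (0:Fin 2) ∈ v') → (y = 1 ∧ (0:Fin 2) ∈ w') :=
        fun ⟨h1, h2⟩ => ⟨h1, h.sublist_right.mem h2⟩
      by_cases hc : y = 1 ∧ (0:Fin 2) ∈ v'
      · simp only [if_pos hc, if_pos (hm hc)]; omega
      · simp only [if_neg hc]; split <;> omega

lemma Shuf.balk_add {u v w : Word} (h : Shuf u v w) :
    ∀ {j k : ℕ}, balk j u → balk k v → balk (j + k) w := by
  induction h with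
  | nil_left v => intro j k _ hv; exact balk_mono v (by omega) hv
  | nil_right u => intro j k hu _; exact balk_mono u (by omega) hu
  | @left u' v' w' x h ih =>
      intro j k hu hv
      simp only [balk] at hu ⊢
      split at hu
      · simp_all only [if_pos]
        refine ⟨by omega, ?_⟩
        have := ih hu.2 hv
        have h2 : j - 1 + k = j + k - 1 := by omega
        rwa [h2] at this
      · simp_all only [if_neg]
        have := ih hu hv
        have h2 : j + 1 + k = j + k + 1 := by omega
        rwa [h2] at this
  | @right u' v' w' y h ih =>
      intro j k hu hv
      simp only [balk] at hv ⊢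
      split at hv
      · simp_all only [if_pos]
        refine ⟨by omega, ?_⟩
        have := ih hu hv.2
        have h2 : j + (k - 1) = j + k - 1 := by omega
        rwa [h2] at this
      · simp_all only [if_neg]
        have := ih hu hv
        have h2 : j + (k + 1) = j + k + 1 := by omega
        rwa [h2] at this

lemma zero_not_mem_rep_one {s : ℕ} : (0 : Fin 2) ∉ replicate s (1 : Fin 2) := by
  intro h
  have := List.eq_of_mem_replicate h
  exact absurd this (by decide)

lemma gcov_rep_one (s : ℕ) : gcov (replicate s (1 : Fin 2)) = 0 := by
  induction s with
  | zero => rfl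
  | succ n ih =>
      rw [List.replicate_succ]
      simp only [gcov, ih]
      simp [zero_not_mem_rep_one]

lemma gcov_rep_zero (s : ℕ) : gcov (replicate s (0 : Fin 2)) = 0 := by
  induction s with
  | zero => rfl
  | succ n ih => rw [List.replicate_succ]; simp [gcov, ih]

lemma gcov_append_rep_one (w : Word) (s : ℕ) :
    gcov (w ++ replicate s (1 : Fin 2)) = gcov w := by
  induction w with
  | nil => simpa [gcov] using gcov_rep_one s
  | cons x w ih =>
      simp only [List.cons_append, gcov, ih, List.mem_append]
      have : ((0:Fin 2) ∈ w ∨ (0:Fin 2) ∈ replicate s (1:Fin 2)) ↔ (0:Fin 2) ∈ w := by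
        constructor
        · rintro (h | h)
          · exact h
          · exact absurd h zero_not_mem_rep_one
        · exact Or.inl
      simp [this, ih]

lemma gcov_rep_zero_append (r : ℕ) (w : Word) :
    gcov (replicate r (0 : Fin 2) ++ w) = gcov w := by
  induction r with
  | zero => rfl
  | succ n ih => rw [List.replicate_succ]; simp only [List.cons_append, gcov, ih]; simp [ih]

lemma gcov_one_zero (a b : ℕ) :
    gcov (replicate a (1 : Fin 2) ++ replicate b (0 : Fin 2)) = if b = 0 then 0 else a := by
  induction a with
  | zero =>
      simp only [List.replicate_zero, List.nil_append, gcov_rep_zero]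
      split <;> rfl
  | succ n ih =>
      rw [List.replicate_succ]
      simp only [List.cons_append, gcov, ih]
      by_cases hb : b = 0
      · subst hb
        simp [zero_not_mem_rep_one, gcov_rep_one]
      · have hmem : (0 : Fin 2) ∈ replicate n (1:Fin 2) ++ replicate b (0:Fin 2) := by
          refine List.mem_append.mpr (Or.inr ?_)
          exact List.mem_replicate.mpr ⟨hb, rfl⟩
        simp [hb, hmem]

lemma gcov_le_count1 (w : Word) : gcov w ≤ w.count 1 := by
  induction w with
  | nil => simp [gcov]
  | cons x w ih =>
      simp only [gcov, List.count_cons]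
      split <;> simp_all <;> omega

lemma count_rep (a b : Fin 2) (n : ℕ) : (replicate n b).count a = if a = b then n else 0 := by
  rcases eq_or_ne a b with rfl | h
  · simp [List.count_replicate]
  · simp [List.count_replicate, h, h.symm]

lemma sublist_blocks4 {m : Word} {r t c s : ℕ}
    (h : m <+ replicate r (0:Fin 2) ++ (replicate t (1:Fin 2) ++ (replicate c (0:Fin 2) ++ replicate s (1:Fin 2)))) :
    ∃ c1 c2 c3 c4, c1 ≤ r ∧ c2 ≤ t ∧ c3 ≤ c ∧ c4 ≤ s ∧
      m = replicate c1 (0:Fin 2) ++ (replicate c2 (1:Fin 2) ++ (replicate c3 (0:Fin 2) ++ replicate c4 (1:Fin 2))) := by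
  rw [List.sublist_append_iff] at h
  obtain ⟨a, m2, rfl, ha, h⟩ := h
  rw [List.sublist_append_iff] at h
  obtain ⟨b, m3, rfl, hb, h⟩ := h
  rw [List.sublist_append_iff] at h
  obtain ⟨cc, d, rfl, hc, hd⟩ := h
  obtain ⟨c1, hc1, rfl⟩ := List.sublist_replicate_iff.mp ha
  obtain ⟨c2, hc2, rfl⟩ := List.sublist_replicate_iff.mp hb
  obtain ⟨c3, hc3, rfl⟩ := List.sublist_replicate_iff.mp hc
  obtain ⟨c4, hc4, rfl⟩ := List.sublist_replicate_iff.mp hd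
  exact ⟨c1, c2, c3, c4, hc1, hc2, hc3, hc4, rfl⟩

lemma balk_zero_no_leading_zero {c : ℕ} {z : Word}
    (h : balk 0 (replicate c (0:Fin 2) ++ z)) : c = 0 := by
  cases c with
  | zero => rfl
  | succ n =>
      rw [List.replicate_succ] at h
      simp only [List.cons_append, balk, if_pos rfl] at h
      exact absurd h.1 (by omega)

lemma pin_v {t : ℕ} {r : ℕ} {v : Word}
    (hsub : v <+ replicate r (0:Fin 2) ++ (replicate t (1:Fin 2) ++ replicate t (0:Fin 2)))
    (h0 : v.count 0 = t) (h1 : v.count 1 = t) (hbal : balk 0 v) :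
    v = replicate t (1:Fin 2) ++ replicate t (0:Fin 2) := by
  have h' : v <+ replicate r (0:Fin 2) ++ (replicate t (1:Fin 2) ++ (replicate t (0:Fin 2) ++ replicate 0 (1:Fin 2))) := by
    simpa using hsub
  obtain ⟨c1, c2, c3, c4, hc1, hc2, hc3, hc4, rfl⟩ := sublist_blocks4 h'
  interval_cases c4
  have hc1z : c1 = 0 := balk_zero_no_leading_zero hbal
  subst hc1z
  simp only [List.count_append, count_rep] at h0 h1
  norm_num at h0 h1
  subst h0 h1
  simp

lemma pin_m {r t s : ℕ} {m : Word}
    (hsub : m <+ replicate r (0:Fin 2) ++ (replicate t (1:Fin 2) ++ (replicate t (0:Fin 2) ++ replicate s (1:Fin 2))))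
    (h0 : m.count 0 = r + t) (h1 : m.count 1 = t) (hg : t ≤ gcov m) :
    m = replicate r (0:Fin 2) ++ (replicate t (1:Fin 2) ++ replicate t (0:Fin 2)) := by
  obtain ⟨c1, c2, c3, c4, hc1, hc2, hc3, hc4, rfl⟩ := sublist_blocks4 hsub
  simp only [List.count_append, count_rep] at h0 h1
  norm_num at h0 h1
  have hc1e : c1 = r := by omega
  have hc3e : c3 = t := by omega
  have hgc : gcov (replicate c1 (0:Fin 2) ++ (replicate c2 (1:Fin 2) ++ (replicate c3 (0:Fin 2) ++ replicate c4 (1:Fin 2)))) = if c3 = 0 then 0 else c2 := by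
    rw [gcov_rep_zero_append, ← List.append_assoc, gcov_append_rep_one, gcov_one_zero]
  rw [hgc] at hg
  have hc2e : c2 = t := by
    by_cases hc3z : c3 = 0
    · rw [if_pos hc3z] at hg; omega
    · rw [if_neg hc3z] at hg; omega
  have hc4e : c4 = 0 := by omega
  rw [hc1e, hc2e, hc3e, hc4e]
  simp

lemma coeff_mapDomain_cons_eq (x : Fin 2) (f : TA) (w : Word) :
    (Finsupp.mapDomain (List.cons x) f) (x :: w) = f w :=
  Finsupp.mapDomain_apply (List.cons_injective) f w

lemma coeff_mapDomain_cons_ne {x y : Fin 2} (hxy : y ≠ x) (f : TA) (w : Word) :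
    (Finsupp.mapDomain (List.cons y) f) (x :: w) = 0 := by
  rw [← Finsupp.notMem_support_iff]
  intro h
  rcases Finset.mem_image.mp (Finsupp.mapDomain_support h) with ⟨w', _, he⟩
  exact hxy (List.cons.inj he).1

lemma shufMul_single_left (q : ℂ) (a : ℂ) (u : Word) (G : TA) :
    shufMul q (Finsupp.single u a) G = a • G.sum fun v cv => cv • shufWord q u v := by
  unfold shufMul
  rw [Finsupp.sum_single_index]
  · rw [Finsupp.smul_sum]
    congr 1
    funext v cv
    rw [smul_smul]
  · simp only [zero_mul, zero_smul]
    exact Finset.sum_const_zero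

lemma shufMul_single_right (q : ℂ) (b : ℂ) (v : Word) (F : TA) :
    shufMul q F (Finsupp.single v b) = b • F.sum fun u cu => cu • shufWord q u v := by
  unfold shufMul
  rw [Finsupp.smul_sum]
  congr 1
  funext u cu
  rw [Finsupp.sum_single_index]
  · rw [smul_smul, mul_comm b cu]
  · rw [mul_zero, zero_smul]

lemma sum_coeff_apply (G : TA) (h : Word → Word) (F : Word → TA) (w : Word) :
    (G.sum fun v cv => cv • F v) w = ∑ v ∈ G.support, G v * (F v) w := by
  rw [Finsupp.sum_apply]
  rfl

lemma mem_support_shufMul {q : ℂ} {f g : TA} {w : Word}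
    (h : w ∈ (shufMul q f g).support) : ∃ u ∈ f.support, ∃ v ∈ g.support, Shuf u v w := by
  unfold shufMul at h
  have h1 := Finsupp.support_sum h
  rcases Finset.mem_biUnion.mp h1 with ⟨u, hu, h2⟩
  have h3 := Finsupp.support_sum h2
  rcases Finset.mem_biUnion.mp h3 with ⟨v, hv, h4⟩
  exact ⟨u, hu, v, hv, mem_shufWord _ _ _ (Finsupp.support_smul h4)⟩

lemma qint_one (p : ℕ) : qint p 1 = 1 := by simp [qint]

lemma qint_succ (p n : ℕ) : qint p (n + 1) = qval p ^ 2 * qint p n + 1 := by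
  unfold qint
  have h : ∀ k, qval p ^ (2 * k) = (qval p ^ 2) ^ k := fun k => by rw [← pow_mul]
  simp only [h]
  rw [geom_sum_succ]

lemma qfac_succ (p n : ℕ) : qfac p (n + 1) = qfac p n * qint p (n + 1) := by
  unfold qfac
  rw [Finset.prod_range_succ]

lemma shufWord_letter_rep (p : ℕ) (c : Fin 2) (n : ℕ) :
    shufWord (qval p) [c] (replicate n c) =
      Finsupp.single (replicate (n + 1) c) (qint p (n + 1)) := by
  induction n with
  | zero =>
      rw [List.replicate_zero, shufWord_nil_right]
      rw [show (0:ℕ) + 1 = 1 from rfl, qint_one, List.replicate_one]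
  | succ n ih =>
      rw [List.replicate_succ, shufWord_cons_cons, shufWord_nil_left, ih,
          Finsupp.mapDomain_single, Finsupp.mapDomain_single]
      simp only [List.map_cons, List.map_nil, List.prod_cons, List.prod_nil, chi,
        eq_self_iff_true, if_true, mul_one, Finsupp.smul_single, smul_eq_mul]
      simp only [← List.replicate_succ]
      rw [← Finsupp.single_add, qint_succ p (n+1)]
      congr 1
      ring

lemma shufPow_F1 (p r : ℕ) :
    shufPow (qval p) F1 r = Finsupp.single (replicate r (0 : Fin 2)) (qfac p r) := by
  induction r with
  | zero =>
      show oneTA = _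
      unfold oneTA qfac
      simp
  | succ r ih =>
      show shufMul (qval p) F1 _ = _
      rw [ih]
      unfold F1
      rw [shufMul_single_left, Finsupp.sum_single_index (by rw [zero_smul]), one_smul,
          shufWord_letter_rep, Finsupp.smul_single, smul_eq_mul, ← qfac_succ]

lemma shufPow_F2 (p s : ℕ) :
    shufPow (qval p) F2 s = Finsupp.single (replicate s (1 : Fin 2)) (qfac p s) := by
  induction s with
  | zero =>
      show oneTA = _
      unfold oneTA qfac
      simp
  | succ s ih =>
      show shufMul (qval p) F2 _ = _
      rw [ih]
      unfold F2
      rw [shufMul_single_left, Finsupp.sum_single_index (by rw [zero_smul]), one_smul,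
          shufWord_letter_rep, Finsupp.smul_single, smul_eq_mul, ← qfac_succ]

lemma fin01 : (0:Fin 2) ≠ 1 := by decide
lemma fin10 : (1:Fin 2) ≠ 0 := by decide

lemma coeffB (p m n : ℕ) :
    (shufWord (qval p) [0] (replicate m (1:Fin 2) ++ replicate n (0:Fin 2)))
      (replicate m (1:Fin 2) ++ replicate (n+1) (0:Fin 2))
      = (qval p)⁻¹ ^ m * qint p (n+1) := by
  induction m with
  | zero =>
      simp only [List.replicate_zero, List.nil_append, pow_zero, one_mul]
      rw [shufWord_letter_rep, Finsupp.single_eq_same]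
  | succ m ih =>
      rw [List.replicate_succ (n := m), List.cons_append, List.cons_append,
          shufWord_cons_cons, shufWord_nil_left]
      rw [Finsupp.add_apply, Finsupp.smul_apply]
      rw [coeff_mapDomain_cons_ne fin01, coeff_mapDomain_cons_eq]
      simp only [List.map_cons, List.map_nil, List.prod_cons, List.prod_nil, chi,
        if_neg fin01, mul_one, smul_eq_mul]
      rw [ih]
      ring

lemma coeffC (p m n : ℕ) :
    (shufWord (qval p) [1,0] (replicate m (1:Fin 2) ++ replicate n (0:Fin 2)))
      (replicate (m+1) (1:Fin 2) ++ replicate (n+1) (0:Fin 2))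
      = qint p (m+1) * qint p (n+1) * (qval p)⁻¹ ^ m := by
  induction m with
  | zero =>
      simp only [List.replicate_zero, List.nil_append, pow_zero, mul_one, qint_one, one_mul]
      cases n with
      | zero =>
          rw [List.replicate_zero, shufWord_nil_right]
          simp [qint_one]
      | succ n =>
          rw [List.replicate_succ (n := n), shufWord_cons_cons]
          rw [List.replicate_succ (n := 0), List.replicate_zero, List.cons_append, List.nil_append]
          rw [Finsupp.add_apply, Finsupp.smul_apply]
          rw [coeff_mapDomain_cons_eq, coeff_mapDomain_cons_ne fin01]
          rw [← List.replicate_succ, shufWord_letter_rep, Finsupp.single_eq_same]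
          simp [qint_one]
  | succ m ih =>
      rw [List.replicate_succ (n := m), List.cons_append, shufWord_cons_cons]
      rw [List.replicate_succ (n := m+1), List.cons_append]
      rw [Finsupp.add_apply, Finsupp.smul_apply]
      rw [coeff_mapDomain_cons_eq, coeff_mapDomain_cons_eq]
      rw [← List.cons_append, ← List.replicate_succ (n := m)]
      rw [coeffB, ih]
      simp only [List.map_cons, List.map_nil, List.prod_cons, List.prod_nil, chi,
        if_neg fin01, eq_self_iff_true, if_true, mul_one, smul_eq_mul]
      rw [qint_succ p (m+1)]
      ring

lemma sublist_one_zero {v : Word} {a b : ℕ}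
    (h : v <+ replicate a (1:Fin 2) ++ replicate b (0:Fin 2)) :
    ∃ c ≤ a, ∃ d ≤ b, v = replicate c (1:Fin 2) ++ replicate d (0:Fin 2) := by
  rw [List.sublist_append_iff] at h
  obtain ⟨x, y, rfl, hx, hy⟩ := h
  obtain ⟨c, hc, rfl⟩ := List.sublist_replicate_iff.mp hx
  obtain ⟨d, hd, rfl⟩ := List.sublist_replicate_iff.mp hy
  exact ⟨c, hc, d, hd, rfl⟩

lemma X3_eq_single (p : ℕ) : X3 p = Finsupp.single ([1,0] : Word) (-(qval p)⁻¹ ^ 2) := by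
  unfold X3
  rw [Finsupp.smul_single', mul_one]

noncomputable def dval (p : ℕ) : ℕ → ℂ
  | 0 => 1
  | t + 1 => -(qval p)⁻¹ ^ 2 * (qint p (t+1) * qint p (t+1) * (qval p)⁻¹ ^ t) * dval p t

lemma gcov_pair : gcov [(1:Fin 2), 0] = 1 := by simp [gcov]

lemma balk_pair : balk 0 [(1:Fin 2), 0] := by
  simp only [balk, if_neg fin10, if_pos rfl]
  exact ⟨le_refl 1, trivial⟩

lemma X3pow_supp (p t : ℕ) : ∀ w ∈ (shufPow (qval p) (X3 p) t).support,
    w.count (0:Fin 2) = t ∧ w.count (1:Fin 2) = t ∧ t ≤ gcov w ∧ balk 0 w := by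
  induction t with
  | zero =>
      intro w hw
      have := Finsupp.support_single_subset hw
      simp only [Finset.mem_singleton] at this
      subst this
      exact ⟨rfl, rfl, le_refl 0, trivial⟩
  | succ t ih =>
      intro w hw
      obtain ⟨u, hu, v, hv, hs⟩ := mem_support_shufMul hw
      rw [X3_eq_single] at hu
      have hu' := Finsupp.support_single_subset hu
      simp only [Finset.mem_singleton] at hu'
      subst hu'
      obtain ⟨h0, h1, hg, hb⟩ := ih v hv
      refine ⟨?_, ?_, ?_, ?_⟩
      · have hc : List.count (0:Fin 2) [(1:Fin 2),0] = 1 := by decide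
        rw [hs.count 0, h0, hc]
        omega
      · have hc : List.count (1:Fin 2) [(1:Fin 2),0] = 1 := by decide
        rw [hs.count 1, h1, hc]
        omega
      · have := hs.gcov_le
        rw [gcov_pair] at this
        omega
      · have := hs.balk_add balk_pair hb
        exact this

lemma dval_succ (p t : ℕ) :
    dval p (t+1) = -(qval p)⁻¹ ^ 2 * (qint p (t+1) * qint p (t+1) * (qval p)⁻¹ ^ t) * dval p t := rfl

lemma count_W1 (a b : ℕ) : List.count (1:Fin 2) (replicate a (1:Fin 2) ++ replicate b (0:Fin 2)) = a := by
  simp [List.count_append, count_rep]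

lemma count_W0 (a b : ℕ) : List.count (0:Fin 2) (replicate a (1:Fin 2) ++ replicate b (0:Fin 2)) = b := by
  simp [List.count_append, count_rep, fin01]

lemma X3pow_diag (p t : ℕ) :
    (shufPow (qval p) (X3 p) t) (replicate t (1:Fin 2) ++ replicate t (0:Fin 2)) = dval p t := by
  induction t with
  | zero =>
      show oneTA _ = _
      simp [oneTA, dval]
  | succ t ih =>
      show (shufMul (qval p) (X3 p) (shufPow (qval p) (X3 p) t)) _ = _
      set G := shufPow (qval p) (X3 p) t with hG
      set W := replicate (t+1) (1:Fin 2) ++ replicate (t+1) (0:Fin 2) with hW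
      set v₀ := replicate t (1:Fin 2) ++ replicate t (0:Fin 2) with hv₀
      rw [X3_eq_single, shufMul_single_left, Finsupp.smul_apply,
          sum_coeff_apply G id (fun v => shufWord (qval p) [1,0] v) W]
      have h1 : ∀ v ∈ G.support, v ≠ v₀ → G v * (shufWord (qval p) [1,0] v) W = 0 := by
        intro v hv hne
        by_cases hz : (shufWord (qval p) [1,0] v) W = 0
        · rw [hz, mul_zero]
        · exfalso
          have hmem : W ∈ (shufWord (qval p) [1,0] v).support := Finsupp.mem_support_iff.mpr hz
          have hs := mem_shufWord _ _ _ hmem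
          have hsub := hs.sublist_right
          obtain ⟨c, hc, d, hd, rfl⟩ := sublist_one_zero hsub
          have e1 := hs.count 1
          have e0 := hs.count 0
          rw [hW] at e1 e0
          rw [count_W1, count_W1] at e1
          rw [count_W0, count_W0] at e0
          have hc1 : List.count (1:Fin 2) [(1:Fin 2),0] = 1 := by decide
          have hc0 : List.count (0:Fin 2) [(1:Fin 2),0] = 1 := by decide
          rw [hc1] at e1
          rw [hc0] at e0
          have hce : c = t := by omega
          have hde : d = t := by omega
          subst hce hde
          exact hne rfl
      have h2 : v₀ ∉ G.support → G v₀ * (shufWord (qval p) [1,0] v₀) W = 0 := by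
        intro h
        rw [Finsupp.notMem_support_iff.mp h, zero_mul]
      rw [Finset.sum_eq_single v₀ h1 h2, ih]
      rw [hv₀, hW, coeffC p t t, dval_succ]
      simp only [smul_eq_mul]
      ring

lemma coeff_G1 (q : ℂ) : ∀ (r : ℕ) (B : Word), (B = [] ∨ ∃ B', B = 1 :: B') →
    (shufWord q (replicate r (0:Fin 2)) B) (replicate r (0:Fin 2) ++ B) = 1 := by
  intro r
  induction r with
  | zero =>
      intro B _
      rw [List.replicate_zero, shufWord_nil_left, List.nil_append, Finsupp.single_eq_same]
  | succ r ih =>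
      rintro B (rfl | ⟨B', rfl⟩)
      · rw [shufWord_nil_right, List.append_nil, Finsupp.single_eq_same]
      · rw [List.replicate_succ, shufWord_cons_cons, List.cons_append]
        rw [Finsupp.add_apply, Finsupp.smul_apply]
        rw [coeff_mapDomain_cons_eq, coeff_mapDomain_cons_ne fin10]
        rw [← List.replicate_succ]  -- restore? may fail; just in case not needed
        rw [ih (1 :: B') (Or.inr ⟨B', rfl⟩)]
        simp

def endsZero : Word → Prop
  | [] => True
  | x :: w => if w = [] then x = 0 else endsZero w

lemma endsZero_tail {x : Fin 2} {w : Word} (h : endsZero (x :: w)) (hw : w ≠ []) :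
    endsZero w := by
  unfold endsZero at h
  rwa [if_neg hw] at h

lemma endsZero_mem {w : Word} (h : endsZero w) (hw : w ≠ []) : (0:Fin 2) ∈ w := by
  induction w with
  | nil => exact absurd rfl hw
  | cons x w ih =>
      by_cases hwe : w = []
      · subst hwe
        unfold endsZero at h
        rw [if_pos rfl] at h
        subst h
        exact List.mem_singleton_self _
      · exact List.mem_cons_of_mem x (ih (endsZero_tail h hwe) hwe)

lemma endsZero_one_tail_ne {w : Word} (h : endsZero ((1:Fin 2) :: w)) : w ≠ [] := by
  intro hw
  subst hw
  unfold endsZero at h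
  rw [if_pos rfl] at h
  exact fin10 h

lemma gcov_cons_one {w : Word} (h : (0:Fin 2) ∈ w) : gcov ((1:Fin 2) :: w) = gcov w + 1 := by
  simp [gcov, h]

lemma coeff_G2 (q : ℂ) : ∀ (m : Word), endsZero m → ∀ (s : ℕ),
    (shufWord q m (replicate s (1:Fin 2))) (m ++ replicate s (1:Fin 2)) = 1 := by
  intro m
  induction m with
  | nil =>
      intro _ s
      rw [shufWord_nil_left, List.nil_append, Finsupp.single_eq_same]
  | cons x m' ihm =>
      intro hE s
      induction s with
      | zero =>
          rw [List.replicate_zero, shufWord_nil_right, List.append_nil, Finsupp.single_eq_same]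
      | succ s ihs =>
          rw [List.replicate_succ, shufWord_cons_cons, List.cons_append]
          rw [Finsupp.add_apply, Finsupp.smul_apply]
          have hterm1 : (Finsupp.mapDomain (List.cons x) (shufWord q m' ((1:Fin 2) :: replicate s 1)))
              (x :: (m' ++ (1:Fin 2) :: replicate s 1)) = 1 := by
            rw [coeff_mapDomain_cons_eq, ← List.replicate_succ]
            by_cases hm' : m' = []
            · subst hm'
              rw [shufWord_nil_left, List.nil_append, Finsupp.single_eq_same]
            · exact ihm (endsZero_tail hE hm') (s+1)
          rw [hterm1]
          by_cases hx : x = (0:Fin 2)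
          · subst hx
            rw [coeff_mapDomain_cons_ne fin10]
            simp
          · have hx1 : x = 1 := by fin_cases x <;> simp_all
            subst hx1
            rw [coeff_mapDomain_cons_eq]
            have hz : (shufWord q ((1:Fin 2) :: m') (replicate s 1)) (m' ++ (1:Fin 2) :: replicate s 1) = 0 := by
              by_contra hz
              have hmem := Finsupp.mem_support_iff.mpr hz
              have hs := mem_shufWord _ _ _ hmem
              have hg := hs.gcov_le
              have h0m : (0:Fin 2) ∈ m' := endsZero_mem (endsZero_tail hE (endsZero_one_tail_ne hE)) (endsZero_one_tail_ne hE)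
              rw [gcov_cons_one h0m] at hg
              have hgw : gcov (m' ++ (1:Fin 2) :: replicate s 1) = gcov m' := by
                rw [← List.replicate_succ, gcov_append_rep_one]
              rw [hgw] at hg
              omega
            rw [hz]
            simp

def wrd (r t s : ℕ) : Word :=
  replicate r (0:Fin 2) ++ (replicate t (1:Fin 2) ++ (replicate t (0:Fin 2) ++ replicate s (1:Fin 2)))

lemma count_wrd0 (r t s : ℕ) : (wrd r t s).count (0:Fin 2) = r + t := by
  simp [wrd, List.count_append, count_rep, fin01]

lemma count_wrd1 (r t s : ℕ) : (wrd r t s).count (1:Fin 2) = t + s := by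
  simp [wrd, List.count_append, count_rep, fin10]

lemma gcov_wrd (r t s : ℕ) : gcov (wrd r t s) = t := by
  unfold wrd
  rw [gcov_rep_zero_append, ← List.append_assoc, gcov_append_rep_one, gcov_one_zero]
  split <;> omega

lemma endsZero_rep_zero (r : ℕ) : endsZero (replicate r (0:Fin 2)) := by
  induction r with
  | zero => trivial
  | succ r ih =>
      rw [List.replicate_succ]
      unfold endsZero
      split
      · rfl
      · exact ih

lemma endsZero_append_zero (w : Word) (n : ℕ) : endsZero (w ++ replicate (n+1) (0:Fin 2)) := by
  induction w with
  | nil => exact endsZero_rep_zero (n+1)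
  | cons x w ih =>
      rw [List.cons_append]
      unfold endsZero
      rw [if_neg (by simp)]
      exact ih

lemma endsZero_m0 (r t : ℕ) :
    endsZero (replicate r (0:Fin 2) ++ (replicate t (1:Fin 2) ++ replicate t (0:Fin 2))) := by
  cases t with
  | zero => simpa using endsZero_rep_zero r
  | succ k =>
      rw [← List.append_assoc]
      exact endsZero_append_zero _ k

lemma M1_coeff (p r t : ℕ) :
    (shufMul (qval p) (Finsupp.single (replicate r (0:Fin 2)) (qfac p r)) (shufPow (qval p) (X3 p) t))
      (replicate r (0:Fin 2) ++ (replicate t (1:Fin 2) ++ replicate t (0:Fin 2)))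
      = qfac p r * dval p t := by
  set G := shufPow (qval p) (X3 p) t with hG
  set v₀ := replicate t (1:Fin 2) ++ replicate t (0:Fin 2) with hv₀
  set m₀ := replicate r (0:Fin 2) ++ (replicate t (1:Fin 2) ++ replicate t (0:Fin 2)) with hm₀
  rw [shufMul_single_left, Finsupp.smul_apply,
      sum_coeff_apply G id (fun v => shufWord (qval p) (replicate r (0:Fin 2)) v) m₀]
  have h1 : ∀ v ∈ G.support, v ≠ v₀ → G v * (shufWord (qval p) (replicate r (0:Fin 2)) v) m₀ = 0 := by
    intro v hv hne
    by_cases hz : (shufWord (qval p) (replicate r (0:Fin 2)) v) m₀ = 0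
    · rw [hz, mul_zero]
    · exfalso
      have hs := mem_shufWord _ _ _ (Finsupp.mem_support_iff.mpr hz)
      obtain ⟨hc0, hc1, _, hbal⟩ := X3pow_supp p t v hv
      exact hne (pin_v hs.sublist_right hc0 hc1 hbal)
  have h2 : v₀ ∉ G.support → G v₀ * (shufWord (qval p) (replicate r (0:Fin 2)) v₀) m₀ = 0 := by
    intro h
    rw [Finsupp.notMem_support_iff.mp h, zero_mul]
  rw [Finset.sum_eq_single v₀ h1 h2]
  have hGv : G v₀ = dval p t := X3pow_diag p t
  have hB : v₀ = [] ∨ ∃ B', v₀ = 1 :: B' := by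
    cases t with
    | zero => left; simp [hv₀]
    | succ k =>
        right
        refine ⟨replicate k (1:Fin 2) ++ replicate (k+1) (0:Fin 2), ?_⟩
        rw [hv₀, List.replicate_succ, List.cons_append]
  rw [hGv, coeff_G1 (qval p) r v₀ hB, mul_one, smul_eq_mul]

lemma main_diag (p r t s : ℕ) :
    (P p r t s) (wrd r t s) =
      (qfac p r * qfac p t * qfac p s)⁻¹ * (qfac p r * qfac p s * dval p t) := by
  unfold P
  rw [shufPow_F1, shufPow_F2]
  set M1 := shufMul (qval p) (Finsupp.single (replicate r (0:Fin 2)) (qfac p r)) (shufPow (qval p) (X3 p) t) with hM1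
  set m₀ := replicate r (0:Fin 2) ++ (replicate t (1:Fin 2) ++ replicate t (0:Fin 2)) with hm₀
  rw [Finsupp.smul_apply, shufMul_single_right, Finsupp.smul_apply,
      sum_coeff_apply M1 id (fun u => shufWord (qval p) u (replicate s (1:Fin 2))) (wrd r t s)]
  have h1 : ∀ m ∈ M1.support, m ≠ m₀ →
      M1 m * (shufWord (qval p) m (replicate s (1:Fin 2))) (wrd r t s) = 0 := by
    intro m hm hne
    by_cases hz : (shufWord (qval p) m (replicate s (1:Fin 2))) (wrd r t s) = 0
    · rw [hz, mul_zero]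
    · exfalso
      have hsw := mem_shufWord _ _ _ (Finsupp.mem_support_iff.mpr hz)
      obtain ⟨u1, hu1, vX, hvX, hs1⟩ := mem_support_shufMul hm
      have hu1' := Finsupp.support_single_subset hu1
      simp only [Finset.mem_singleton] at hu1'
      subst hu1'
      obtain ⟨hx0, hx1, hxg, _⟩ := X3pow_supp p t vX hvX
      have hc0 : m.count (0:Fin 2) = r + t := by
        rw [hs1.count 0, hx0, count_rep]
        simp
      have hc1 : m.count (1:Fin 2) = t := by
        rw [hs1.count 1, hx1, count_rep]
        simp [fin10]
      have hg : t ≤ gcov m := by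
        have := hs1.gcov_le
        rw [gcov_rep_zero] at this
        omega
      have hsub : m <+ wrd r t s := hsw.sublist_left
      exact hne (pin_m hsub hc0 hc1 hg)
  have h2 : m₀ ∉ M1.support →
      M1 m₀ * (shufWord (qval p) m₀ (replicate s (1:Fin 2))) (wrd r t s) = 0 := by
    intro h
    rw [Finsupp.notMem_support_iff.mp h, zero_mul]
  rw [Finset.sum_eq_single m₀ h1 h2]
  have hww : wrd r t s = m₀ ++ replicate s (1:Fin 2) := by
    rw [hm₀, wrd]
    simp [List.append_assoc]
  rw [hww, coeff_G2 (qval p) m₀ (endsZero_m0 r t) s, mul_one, hM1, hm₀, M1_coeff p r t]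
  simp only [smul_eq_mul]
  ring

lemma main_vanish (p r t s r' t' s' : ℕ)
    (h : r' + t' ≠ r + t ∨ t' + s' ≠ t + s ∨ t < t') :
    (P p r' t' s') (wrd r t s) = 0 := by
  by_contra hz
  unfold P at hz
  rw [shufPow_F1, shufPow_F2, Finsupp.smul_apply, smul_eq_mul] at hz
  have hz2 : (shufMul (qval p)
      (shufMul (qval p) (Finsupp.single (replicate r' (0:Fin 2)) (qfac p r')) (shufPow (qval p) (X3 p) t'))
      (Finsupp.single (replicate s' (1:Fin 2)) (qfac p s'))) (wrd r t s) ≠ 0 := by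
    intro h0
    rw [h0, mul_zero] at hz
    exact hz rfl
  have hw := Finsupp.mem_support_iff.mpr hz2
  obtain ⟨m, hm, v2, hv2, hs2⟩ := mem_support_shufMul hw
  have hv2' := Finsupp.support_single_subset hv2
  simp only [Finset.mem_singleton] at hv2'
  subst hv2'
  obtain ⟨u1, hu1, vX, hvX, hs1⟩ := mem_support_shufMul hm
  have hu1' := Finsupp.support_single_subset hu1
  simp only [Finset.mem_singleton] at hu1'
  subst hu1'
  obtain ⟨hx0, hx1, hxg, _⟩ := X3pow_supp p t' vX hvX
  have e0 : (wrd r t s).count (0:Fin 2) = r' + t' := by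
    rw [hs2.count 0, hs1.count 0, hx0]
    simp [count_rep, fin01]
  have e1 : (wrd r t s).count (1:Fin 2) = t' + s' := by
    rw [hs2.count 1, hs1.count 1, hx1]
    simp [count_rep, fin10]
  have g2 := hs2.gcov_le
  have g1 := hs1.gcov_le
  rw [gcov_rep_one] at g2
  rw [gcov_rep_zero] at g1
  rw [count_wrd0] at e0
  rw [count_wrd1] at e1
  rw [gcov_wrd] at g2
  rcases h with h | h | h <;> omega

lemma qval_ne_zero (p : ℕ) : qval p ≠ 0 := Complex.exp_ne_zero _

lemma qsq_pow_ne_one (p : ℕ) (hp : 2 ≤ p) (j : ℕ) (h1 : 1 ≤ j) (h2 : j < p) :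
    (qval p ^ 2) ^ j ≠ 1 := by
  have hp0 : (p:ℂ) ≠ 0 := Nat.cast_ne_zero.mpr (by omega)
  rw [← pow_mul]
  unfold qval
  rw [← Complex.exp_nat_mul]
  intro hone
  rw [Complex.exp_eq_one_iff] at hone
  obtain ⟨n, hn⟩ := hone
  have hpi : (Real.pi : ℂ) * Complex.I ≠ 0 :=
    mul_ne_zero (Complex.ofReal_ne_zero.mpr Real.pi_ne_zero) Complex.I_ne_zero
  have key : 2 * (j : ℂ) = (n : ℂ) * 2 * p := by
    have h' : 2 * (j:ℂ) * ((Real.pi:ℂ) * Complex.I) = ((n : ℂ) * 2 * p) * ((Real.pi:ℂ) * Complex.I) := by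
      field_simp at hn
      push_cast at hn ⊢
      linear_combination hn * ((Real.pi:ℂ) * Complex.I)
    exact mul_right_cancel₀ hpi h'
  have key2 : 2 * (j : ℤ) = n * 2 * p := by
    exact_mod_cast key
  have hd : (p:ℤ) ∣ (j:ℤ) := by
    refine ⟨n, ?_⟩
    have h3 : 2 * (j:ℤ) = 2 * ((p:ℤ) * n) := by linear_combination key2
    linarith
  have hle : (p:ℤ) ≤ (j:ℤ) := Int.le_of_dvd (by exact_mod_cast h1) hd
  have hlt : (j:ℤ) < (p:ℤ) := by exact_mod_cast h2
  omega

lemma qint_ne_zero (p : ℕ) (hp : 2 ≤ p) (j : ℕ) (h1 : 1 ≤ j) (h2 : j < p) :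
    qint p j ≠ 0 := by
  have hgeom : qint p j = ((qval p ^ 2) ^ j - 1) / (qval p ^ 2 - 1) := by
    unfold qint
    rw [← geom_sum_eq]
    · apply Finset.sum_congr rfl
      intro k _
      rw [pow_mul]
    · intro hq1
      exact qsq_pow_ne_one p hp 1 le_rfl (by omega) (by rw [pow_one]; exact hq1)
  rw [hgeom]
  apply div_ne_zero
  · exact sub_ne_zero.mpr (qsq_pow_ne_one p hp j h1 h2)
  · exact sub_ne_zero.mpr (qsq_pow_ne_one p hp 1 le_rfl (by omega) ∘ (by rw [pow_one]; exact id))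

lemma qfac_ne_zero (p : ℕ) (hp : 2 ≤ p) (n : ℕ) (hn : n < p) : qfac p n ≠ 0 := by
  unfold qfac
  rw [Finset.prod_ne_zero_iff]
  intro k hk
  rw [Finset.mem_range] at hk
  exact qint_ne_zero p hp (k+1) (by omega) (by omega)

lemma dval_ne_zero (p : ℕ) (hp : 2 ≤ p) (t : ℕ) (ht : t < p) : dval p t ≠ 0 := by
  induction t with
  | zero => exact one_ne_zero
  | succ t ih =>
      rw [dval_succ]
      have hq : (qval p)⁻¹ ≠ 0 := inv_ne_zero (qval_ne_zero p)
      apply mul_ne_zero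
      apply mul_ne_zero
      · exact neg_ne_zero.mpr (pow_ne_zero 2 hq)
      · exact mul_ne_zero (mul_ne_zero (qint_ne_zero p hp (t+1) (by omega) ht)
          (qint_ne_zero p hp (t+1) (by omega) ht)) (pow_ne_zero t hq)
      · exact ih (by omega)

theorem pbw_linearIndependent' (p : ℕ) (hp : 2 ≤ p) :
    LinearIndependent ℂ
      (fun rts : Fin p × Fin p × Fin p => P p rts.1.val rts.2.1.val rts.2.2.val) := by
  rw [linearIndependent_iff]
  intro l hl
  by_contra hne
  obtain ⟨i₁, hi₁⟩ := Finsupp.support_nonempty_iff.mpr hne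
  set S := l.support.filter
    (fun j => j.1.val + j.2.1.val = i₁.1.val + i₁.2.1.val ∧
              j.2.1.val + j.2.2.val = i₁.2.1.val + i₁.2.2.val) with hSdef
  have hSne : S.Nonempty := ⟨i₁, Finset.mem_filter.mpr ⟨hi₁, rfl, rfl⟩⟩
  obtain ⟨i₀, hi₀S, hmin⟩ := S.exists_min_image (fun j => j.2.1.val) hSne
  obtain ⟨hi₀l, hg1, hg2⟩ := Finset.mem_filter.mp hi₀S
  set r := i₀.1.val
  set t := i₀.2.1.val
  set s := i₀.2.2.val
  set W := wrd r t s with hW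
  have hval : (Finsupp.linearCombination ℂ
      (fun rts : Fin p × Fin p × Fin p => P p rts.1.val rts.2.1.val rts.2.2.val) l) W = 0 := by
    rw [hl]; rfl
  rw [Finsupp.linearCombination_apply, Finsupp.sum_apply] at hval
  have hsum : (l.sum fun i a => (a • P p i.1.val i.2.1.val i.2.2.val) W)
      = ∑ j ∈ l.support, l j * (P p j.1.val j.2.1.val j.2.2.val) W := by
    apply Finset.sum_congr rfl
    intro j _
    dsimp only
    rw [Finsupp.smul_apply, smul_eq_mul]
  rw [hsum] at hval
  have h1 : ∀ j ∈ l.support, j ≠ i₀ → l j * (P p j.1.val j.2.1.val j.2.2.val) W = 0 := by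
    intro j hj hne'
    by_cases hgr : j.1.val + j.2.1.val = r + t ∧ j.2.1.val + j.2.2.val = t + s
    · have hjS : j ∈ S := by
        refine Finset.mem_filter.mpr ⟨hj, ?_, ?_⟩
        · omega
        · omega
      have hle := hmin j hjS
      by_cases hteq : j.2.1.val = t
      · exfalso
        apply hne'
        have e1 : j.1.val = i₀.1.val := by omega
        have e2 : j.2.2.val = i₀.2.2.val := by omega
        have : j.2.1.val = i₀.2.1.val := hteq
        ext
        · exact e1
        · exact this
        · exact e2
      · have hlt : t < j.2.1.val := by omega
        rw [main_vanish p r t s _ _ _ (Or.inr (Or.inr hlt)), mul_zero]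
    · push_neg at hgr
      rw [main_vanish p r t s _ _ _ ?_, mul_zero]
      by_cases hc : j.1.val + j.2.1.val = r + t
      · exact Or.inr (Or.inl (hgr hc))
      · exact Or.inl hc
  have h2 : i₀ ∉ l.support → l i₀ * (P p r t s) W = 0 := by
    intro h
    rw [Finsupp.notMem_support_iff.mp h, zero_mul]
  rw [Finset.sum_eq_single i₀ h1 h2] at hval
  rw [hW, main_diag p r t s] at hval
  have hr : r < p := i₀.1.isLt
  have ht : t < p := i₀.2.1.isLt
  have hs : s < p := i₀.2.2.isLt
  have hdz : (qfac p r * qfac p t * qfac p s)⁻¹ * (qfac p r * qfac p s * dval p t) ≠ 0 := by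
    apply mul_ne_zero
    · apply inv_ne_zero
      exact mul_ne_zero (mul_ne_zero (qfac_ne_zero p hp r hr) (qfac_ne_zero p hp t ht))
        (qfac_ne_zero p hp s hs)
    · exact mul_ne_zero (mul_ne_zero (qfac_ne_zero p hp r hr) (qfac_ne_zero p hp s hs))
        (dval_ne_zero p hp t ht)
  have : l i₀ = 0 := by
    rcases mul_eq_zero.mp hval with h | h
    · exact h
    · exact absurd h hdz
  exact Finsupp.mem_support_iff.mp hi₀l this

theorem pbw_linearIndependent (p : ℕ) (hp : 2 ≤ p) :
    LinearIndependent ℂ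
      (fun rts : Fin p × Fin p × Fin p => P p rts.1.val rts.2.1.val rts.2.2.val) := by
  exact pbw_linearIndependent' p hp
end
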